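/- Fix an integer d ≥ 2 and let m = d − 2. For every n ≥ 0, the corridor number c^{(m)}_n equals the range of the n-th row of the circular Pascal array of order d; that is, c^{(m)}_n = (max_{0 ≤ k ≤ d−1} σ_{n,k}) − (min_{0 ≤ k ≤ d−1} σ_{n,k}). -/

import Mathlib

/-- Binomial coefficient `C(n,x)` with integer lower argument, zero when `x < 0` or `x > n`. -/
noncomputable def binomZ (n : ℕ) (x : ℤ) : ℕ := if 0 ≤ x then n.choose x.toNat else 0

/-- Circular Pascal array of order `d` with initial offset `y0`:
`σ_{n,k} = Σ_{i=0}^{y0} Σ_{j∈ℤ} C(n, k − i + d·j)`. -/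
noncomputable def circPascal (d y0 n : ℕ) (k : ℤ) : ℕ :=
  ∑ i ∈ Finset.range (y0 + 1), ∑ᶠ j : ℤ, binomZ n (k - i + d * j)

/-- Corridor number of order `m`: the number of ±1 sequences of length `n` all of whose
partial sums, shifted by `y0`, stay in `{0,…,m}`. -/
noncomputable def corridorCount (m n y0 : ℕ) : ℕ :=
  Nat.card {r : Fin n → ℤ // (∀ i, r i = 1 ∨ r i = -1) ∧
    ∀ j : Fin n, 0 ≤ (y0 : ℤ) + ∑ i ∈ Finset.Iic j, r i ∧
      (y0 : ℤ) + ∑ i ∈ Finset.Iic j, r i ≤ (m : ℤ)}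


/-- Sum of binomial coefficients over a residue class. -/
def sig (d n : ℕ) (k : ℤ) : ℕ :=
  ∑ x ∈ Finset.range (n+1), if (d:ℤ) ∣ ((x:ℤ) - k) then n.choose x else 0

lemma sig_congr {d n : ℕ} {k k' : ℤ} (h : (d:ℤ) ∣ (k - k')) : sig d n k = sig d n k' := by
  unfold sig
  refine Finset.sum_congr rfl fun x _ => ?_
  congr 1
  refine propext ⟨fun hx => ?_, fun hx => ?_⟩
  · have : ((x:ℤ) - k') = ((x:ℤ) - k) + (k - k') := by ring
    rw [this]; exact dvd_add hx h
  · have : ((x:ℤ) - k) = ((x:ℤ) - k') - (k - k') := by ring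
    rw [this]; exact dvd_sub hx h

lemma sig_symm (d n : ℕ) (k : ℤ) : sig d n k = sig d n ((n:ℤ) - k) := by
  unfold sig
  rw [← Finset.sum_range_reflect]
  refine Finset.sum_congr rfl fun x hx => ?_
  have hxn : x ≤ n := by
    have := Finset.mem_range.mp hx; omega
  have he : n + 1 - 1 - x = n - x := by omega
  rw [he]
  have hc : ((n - x : ℕ) : ℤ) = (n:ℤ) - x := by
    have := Nat.cast_sub hxn (R := ℤ); omega
  rw [hc, Nat.choose_symm hxn]
  congr 1
  refine propext ⟨fun h => ?_, fun h => ?_⟩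
  · have : ((x:ℤ) - ((n:ℤ) - k)) = -(((n:ℤ) - x) - k) := by ring
    rw [this]; exact dvd_neg.mpr h
  · have : (((n:ℤ) - x) - k) = -((x:ℤ) - ((n:ℤ) - k)) := by ring
    rw [this]; exact dvd_neg.mpr h

lemma sig_pascal (d n : ℕ) (k : ℤ) : sig d (n+1) k = sig d n k + sig d n (k-1) := by
  unfold sig
  have step : ∀ x ∈ Finset.range (n+2),
      (if (d:ℤ) ∣ ((x:ℤ) - k) then (n+1).choose x else 0)
      = (if (d:ℤ) ∣ ((x:ℤ) - k) then n.choose x else 0)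
        + (if (d:ℤ) ∣ ((x:ℤ) - k) then (if 1 ≤ x then n.choose (x-1) else 0) else 0) := by
    intro x _
    by_cases hdvd : (d:ℤ) ∣ ((x:ℤ) - k) <;> simp [hdvd]
    match x with
    | 0 => simp
    | x+1 => simp [Nat.choose_succ_succ' n x]; omega
  rw [Finset.sum_congr rfl step, Finset.sum_add_distrib]
  congr 1
  · rw [Finset.sum_range_succ]
    simp [Nat.choose_succ_self]
  · rw [Finset.sum_range_succ']
    simp only [Nat.cast_zero, le_refl, Nat.add_sub_cancel]
    have : ∀ i, ((i:ℤ) + 1 - k) = ((i:ℤ) - (k-1)) := by intro i; ring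
    simp only [Nat.cast_add, Nat.cast_one, this]
    simp

lemma binomZ_eq_sum (n : ℕ) (x : ℤ) :
    binomZ n x = ∑ t ∈ Finset.range (n+1), if (t:ℤ) = x then n.choose t else 0 := by
  by_cases h1 : 0 ≤ x
  · by_cases h2 : x ≤ n
    · rw [Finset.sum_eq_single x.toNat]
      · simp [binomZ, h1, Int.toNat_of_nonneg h1]
      · intro t _ ht
        rw [if_neg]; omega
      · intro hmem
        exfalso; apply hmem
        rw [Finset.mem_range]; omega
    · rw [Finset.sum_eq_zero]
      · simp only [binomZ, if_pos h1]
        apply Nat.choose_eq_zero_of_lt; omega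
      · intro t htm
        have := Finset.mem_range.mp htm
        rw [if_neg]; omega
  · rw [Finset.sum_eq_zero]
    · simp [binomZ, h1]
    · intro t htm
      rw [if_neg]; omega

lemma circPascal_eq_sig (d n : ℕ) (hd : 1 ≤ d) (k : ℤ) :
    circPascal d 0 n k = sig d n k := by
  unfold circPascal
  rw [Finset.sum_range_one]
  simp only [Nat.cast_zero, sub_zero]
  set T : Finset ℤ := Finset.Icc (-(n + k.natAbs + 1 : ℤ)) (n + k.natAbs + 1) with hT
  have habs : ∀ j : ℤ, 0 ≤ k + d * j → k + d * j ≤ n → j ∈ T := by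
    intro j h1 h2
    have hj : j.natAbs ≤ ((d:ℤ) * j).natAbs := by
      rw [Int.natAbs_mul]
      calc j.natAbs = 1 * j.natAbs := (one_mul _).symm
        _ ≤ (d:ℤ).natAbs * j.natAbs := Nat.mul_le_mul_right _ (by simpa using hd)
    rw [hT, Finset.mem_Icc]
    omega
  have hsupp : (Function.support fun j : ℤ => binomZ n (k + d * j)) ⊆ ↑T := by
    intro j hj
    simp only [Function.mem_support, binomZ] at hj
    by_cases h0 : 0 ≤ k + d * j
    · have h2 : k + d * j ≤ n := by
        by_contra hc
        apply hj
        rw [if_pos h0]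
        apply Nat.choose_eq_zero_of_lt
        omega
      exact habs j h0 h2
    · exact absurd (if_neg h0) hj
  rw [finsum_eq_finset_sum_of_support_subset _ hsupp]
  have hswap : ∀ j ∈ T, binomZ n (k + d * j)
      = ∑ t ∈ Finset.range (n+1), if (t:ℤ) = k + d * j then n.choose t else 0 :=
    fun j _ => binomZ_eq_sum n _
  rw [Finset.sum_congr rfl hswap, Finset.sum_comm]
  refine Finset.sum_congr rfl fun t ht => ?_
  have htn : t ≤ n := by have := Finset.mem_range.mp ht; omega
  by_cases hdvd : (d:ℤ) ∣ ((t:ℤ) - k)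
  · rw [if_pos hdvd]
    obtain ⟨j0, hj0⟩ := hdvd
    have hj0' : (t:ℤ) = k + d * j0 := by omega
    rw [Finset.sum_eq_single j0]
    · rw [if_pos hj0']
    · intro j _ hjne
      rw [if_neg]
      intro hEq
      apply hjne
      have hd0 : (d:ℤ) ≠ 0 := by omega
      have : (d:ℤ) * j = (d:ℤ) * j0 := by omega
      exact mul_left_cancel₀ hd0 this
    · intro hmem
      exfalso; apply hmem
      apply habs j0 <;> omega
  · rw [if_neg hdvd, Finset.sum_eq_zero]
    intro j _
    rw [if_neg]
    intro hEq
    apply hdvd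
    exact ⟨j, by omega⟩

lemma sig_zero (d : ℕ) (t : ℤ) : sig d 0 t = if (d:ℤ) ∣ t then 1 else 0 := by
  simp only [sig]
  rw [Finset.sum_range_succ, Finset.sum_range_zero]
  simp only [Nat.cast_zero, zero_sub, Nat.choose_self, zero_add]
  congr 1
  simp [Int.dvd_neg]

lemma not_dvd_small {d : ℕ} {t : ℤ} (h1 : 0 < t) (h2 : t < (d:ℤ)) : ¬ (d:ℤ) ∣ t := by
  intro hdvd
  have := Int.le_of_dvd h1 hdvd
  omega

/-- Corridor path counts by endpoint, defined recursively. -/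
def W (m : ℕ) : ℕ → ℤ → ℕ
  | 0, b => if b = 0 then 1 else 0
  | n+1, b => if 0 ≤ b ∧ b ≤ (m:ℤ) then W m n (b-1) + W m n (b+1) else 0

lemma W_zero_of_not_mem (m n : ℕ) (b : ℤ) (h : ¬ (0 ≤ b ∧ b ≤ (m:ℤ))) : W m n b = 0 := by
  cases n with
  | zero =>
    have : b ≠ 0 := by
      intro hb; apply h; constructor <;> simp [hb]
    simp [W, this]
  | succ n => simp [W, h]

lemma W_zero_of_parity (m : ℕ) : ∀ (n : ℕ) (b : ℤ), ¬ ((2:ℤ) ∣ ((n:ℤ) + b)) → W m n b = 0 := by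
  intro n
  induction n with
  | zero =>
    intro b hb
    have : b ≠ 0 := by intro h; apply hb; simp [h]
    simp [W, this]
  | succ n ih =>
    intro b hb
    by_cases h : 0 ≤ b ∧ b ≤ (m:ℤ)
    · simp only [W, if_pos h]
      rw [ih (b-1) (by push_cast at hb ⊢; omega), ih (b+1) (by push_cast at hb ⊢; omega)]
  
    · simp [W, h]

/-- The closed form: `W m n b = σ(t) − σ(t+1)` where `b = 2t − n`, as integers. -/
lemma W_closed (m : ℕ) : ∀ (n : ℕ) (t b : ℤ), b = 2*t - (n:ℤ) → 0 ≤ b → b ≤ (m:ℤ) →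
    (W m n b : ℤ) = (sig (m+2) n t : ℤ) - (sig (m+2) n (t+1) : ℤ) := by
  intro n
  induction n with
  | zero =>
    intro t b hbt hb0 hbm
    by_cases ht : t = 0
    · subst ht
      have hb : b = 0 := by omega
      subst hb
      rw [sig_zero, sig_zero, if_pos (dvd_zero _), if_neg (not_dvd_small (by omega) (by push_cast; omega))]
      simp [W]
    · have ht1 : 1 ≤ t := by omega
      have hb : b ≠ 0 := by omega
      rw [sig_zero, sig_zero, if_neg (not_dvd_small (by omega) (by push_cast; omega)),
        if_neg (not_dvd_small (by omega) (by push_cast; omega))]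
      simp [W, hb]
  | succ n ih =>
    intro t b hbt hb0 hbm
    have hrange : 0 ≤ b ∧ b ≤ (m:ℤ) := ⟨hb0, hbm⟩
    simp only [W, if_pos hrange]
    push_cast
    have hpas : ∀ s : ℤ, (sig (m+2) (n+1) s : ℤ) = (sig (m+2) n s : ℤ) + (sig (m+2) n (s-1) : ℤ) := by
      intro s
      have := sig_pascal (m+2) n s
      push_cast [this]; ring
    by_cases hb : b = 0
    · subst hb
      have hW1 : W m n (0 - 1) = 0 := W_zero_of_not_mem m n _ (by omega)
      by_cases hm : m = 0
      · subst hm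
        have hW2 : W 0 n (0 + 1) = 0 := W_zero_of_not_mem 0 n _ (by norm_num)
        rw [hW1, hW2, hpas t, hpas (t+1)]
        have hc : sig (0+2) n (t-1) = sig (0+2) n (t+1) := by
          apply sig_congr; norm_num; omega
        rw [hc]
        push_cast
        ring
      · have hW2 : (W m n (0 + 1) : ℤ) = (sig (m+2) n t : ℤ) - (sig (m+2) n (t+1) : ℤ) := by
          apply ih t (0+1) (by omega) (by norm_num) (by omega)
        rw [hW1, hW2, hpas t, hpas (t+1)]
        have hc : sig (m+2) n (t-1) = sig (m+2) n t := by
          rw [sig_symm]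
          apply sig_congr
          have : (n:ℤ) = 2*t - 1 := by omega
          rw [this]
          ring_nf
          simp
        rw [hc]
        push_cast
        ring
    · by_cases hbm' : b = (m:ℤ)
      · -- b = m ≥ 1
        have hW2 : W m n (b + 1) = 0 := W_zero_of_not_mem m n _ (by omega)
        have hW1 : (W m n (b - 1) : ℤ) = (sig (m+2) n (t-1) : ℤ) - (sig (m+2) n t : ℤ) := by
          have h := ih (t-1) (b-1) (by omega) (by omega) (by omega)
          have he : t - 1 + 1 = t := by ring
          rw [he] at h
          exact h
        rw [hW1, hW2, hpas t, hpas (t+1)]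
        have hc : sig (m+2) n (t+1) = sig (m+2) n t := by
          rw [sig_symm]
          apply sig_congr
          have : (n:ℤ) = 2*t - 1 - m := by omega
          rw [this]
          push_cast
          ring_nf
          exact ⟨-1, by ring⟩
        rw [hc]
        push_cast
        ring
      · -- interior
        have hW1 : (W m n (b - 1) : ℤ) = (sig (m+2) n (t-1) : ℤ) - (sig (m+2) n t : ℤ) := by
          have h := ih (t-1) (b-1) (by omega) (by omega) (by omega)
          have he : t - 1 + 1 = t := by ring
          rw [he] at h
          exact h
        have hW2 : (W m n (b + 1) : ℤ) = (sig (m+2) n t : ℤ) - (sig (m+2) n (t+1) : ℤ) := by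
          apply ih t (b+1) (by omega) (by omega) (by omega)
        rw [hW1, hW2, hpas t, hpas (t+1)]
        push_cast
        ring

def pm {n : ℕ} (r : Fin n → ℤ) : Prop := ∀ i, r i = 1 ∨ r i = -1

def corr (m : ℕ) {n : ℕ} (r : Fin n → ℤ) : Prop :=
  ∀ j : Fin n, 0 ≤ ∑ i ∈ Finset.Iic j, r i ∧ ∑ i ∈ Finset.Iic j, r i ≤ (m:ℤ)

noncomputable def V (m n : ℕ) (b : ℤ) : ℕ :=
  Nat.card {r : Fin n → ℤ // pm r ∧ (corr m r ∧ (∑ i, r i) = b)}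

lemma finite_aux {n : ℕ} (P : (Fin n → ℤ) → Prop) :
    Finite {r : Fin n → ℤ // pm r ∧ P r} := by
  apply Finite.of_injective (f := fun r : {r : Fin n → ℤ // pm r ∧ P r} =>
    (fun i => decide (r.1 i = 1) : Fin n → Bool))
  intro r s hrs
  apply Subtype.ext
  funext i
  have h1 := r.2.1 i
  have h2 := s.2.1 i
  have := congrFun hrs i
  rcases h1 with h1 | h1 <;> rcases h2 with h2 | h2 <;> simp [h1, h2] at this ⊢ <;> omega

lemma Iic_castSucc_eq {n : ℕ} (j : Fin n) :
    Finset.Iic (Fin.castSucc j) = (Finset.Iic j).map Fin.castSuccEmb := by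
  ext k
  simp only [Finset.mem_Iic, Finset.mem_map]
  constructor
  · intro hk
    have hkn : (k:ℕ) < n := by
      have : (k:ℕ) ≤ (j:ℕ) := hk
      omega
    exact ⟨⟨(k:ℕ), hkn⟩, by simpa [Fin.le_def] using hk, by simp [Fin.castSuccEmb, Fin.ext_iff]⟩
  · rintro ⟨a, ha, rfl⟩
    rw [Fin.le_def] at ha ⊢
    simpa [Fin.castSuccEmb] using ha

lemma sum_Iic_castSucc {n : ℕ} (r : Fin (n+1) → ℤ) (j : Fin n) :
    ∑ i ∈ Finset.Iic (Fin.castSucc j), r i = ∑ i ∈ Finset.Iic j, Fin.init r i := by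
  rw [Iic_castSucc_eq, Finset.sum_map]
  rfl

lemma Iic_last_eq {n : ℕ} : Finset.Iic (Fin.last n) = Finset.univ := by
  ext k; simp [Fin.le_last]

lemma sum_univ_eq {n : ℕ} (r : Fin (n+1) → ℤ) :
    ∑ i, r i = (∑ i, Fin.init r i) + r (Fin.last n) := by
  rw [Fin.sum_univ_castSucc (f := r)]
  rfl

section snocinit
variable {n m : ℕ}

lemma pm_init {r : Fin (n+1) → ℤ} (h : pm r) : pm (Fin.init r) := fun i => h _

lemma corr_init {r : Fin (n+1) → ℤ} (h : corr m r) : corr m (Fin.init r) := by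
  intro j
  rw [← sum_Iic_castSucc]
  exact h _

lemma pm_snoc {r' : Fin n → ℤ} {c : ℤ} (h : pm r') (hc : c = 1 ∨ c = -1) :
    pm (Fin.snoc r' c) := by
  intro i
  refine Fin.lastCases ?_ ?_ i
  · rw [Fin.snoc_last]; exact hc
  · intro j; rw [Fin.snoc_castSucc]; exact h j

lemma sum_snoc {r' : Fin n → ℤ} {c : ℤ} :
    ∑ i, Fin.snoc r' c i = (∑ i, r' i) + c := by
  rw [sum_univ_eq, Fin.init_snoc, Fin.snoc_last]

lemma corr_snoc {r' : Fin n → ℤ} {c : ℤ} (h : corr m r')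
    (h0 : 0 ≤ (∑ i, r' i) + c) (h1 : (∑ i, r' i) + c ≤ (m:ℤ)) :
    corr m (Fin.snoc r' c) := by
  intro j
  refine Fin.lastCases ?_ ?_ j
  · rw [Iic_last_eq, sum_snoc]
    exact ⟨h0, h1⟩
  · intro j'
    rw [sum_Iic_castSucc, Fin.init_snoc]
    exact h j'

lemma V_rec (m n : ℕ) (b : ℤ) :
    V m (n+1) b = if 0 ≤ b ∧ b ≤ (m:ℤ) then V m n (b-1) + V m n (b+1) else 0 := by
  by_cases hb : 0 ≤ b ∧ b ≤ (m:ℤ)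
  · rw [if_pos hb]
    have e : {r : Fin (n+1) → ℤ // pm r ∧ (corr m r ∧ (∑ i, r i) = b)} ≃
        {r' : Fin n → ℤ // pm r' ∧ (corr m r' ∧ (∑ i, r' i) = b - 1)} ⊕
        {r' : Fin n → ℤ // pm r' ∧ (corr m r' ∧ (∑ i, r' i) = b + 1)} := by
      refine
        { toFun := fun r =>
            if h1 : r.1 (Fin.last n) = 1 then
              Sum.inl ⟨Fin.init r.1, pm_init r.2.1, corr_init r.2.2.1, by
                have := sum_univ_eq r.1
                rw [h1] at this
                omega⟩
            else
              Sum.inr ⟨Fin.init r.1, pm_init r.2.1, corr_init r.2.2.1, by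
                have hneg : r.1 (Fin.last n) = -1 := (r.2.1 _).resolve_left h1
                have := sum_univ_eq r.1
                rw [hneg] at this
                omega⟩
          invFun := fun p =>
            match p with
            | Sum.inl r' => ⟨Fin.snoc r'.1 1, pm_snoc r'.2.1 (Or.inl rfl),
                corr_snoc r'.2.2.1 (by omega) (by omega), by rw [sum_snoc]; omega⟩
            | Sum.inr r' => ⟨Fin.snoc r'.1 (-1), pm_snoc r'.2.1 (Or.inr rfl),
                corr_snoc r'.2.2.1 (by omega) (by omega), by rw [sum_snoc]; omega⟩
          left_inv := ?_
          right_inv := ?_ }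
      · intro r
        dsimp only
        by_cases h1 : r.1 (Fin.last n) = 1
        · rw [dif_pos h1]
          dsimp only
          apply Subtype.ext
          simp only
          rw [← h1]
          exact Fin.snoc_init_self r.1
        · rw [dif_neg h1]
          dsimp only
          apply Subtype.ext
          simp only
          have hneg : r.1 (Fin.last n) = -1 := (r.2.1 _).resolve_left h1
          rw [← hneg]
          exact Fin.snoc_init_self r.1
      · intro p
        rcases p with r' | r'
        · dsimp only
          rw [dif_pos (by rw [Fin.snoc_last])]
          congr 1
          apply Subtype.ext
          simp [Fin.init_snoc]
        · dsimp only
          rw [dif_neg (by rw [Fin.snoc_last]; norm_num)]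
          congr 1
          apply Subtype.ext
          simp [Fin.init_snoc]
    have f1 := finite_aux (n := n) (fun r' => corr m r' ∧ (∑ i, r' i) = b - 1)
    have f2 := finite_aux (n := n) (fun r' => corr m r' ∧ (∑ i, r' i) = b + 1)
    rw [V, Nat.card_congr e, Nat.card_sum]
    rfl
  · rw [if_neg hb]
    have : IsEmpty {r : Fin (n+1) → ℤ // pm r ∧ (corr m r ∧ (∑ i, r i) = b)} := by
      constructor
      rintro ⟨r, hpm, hcorr, hsum⟩
      apply hb
      have := hcorr (Fin.last n)
      rw [Iic_last_eq] at this
      rw [← hsum]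
      exact this
    rw [V]
    simp

end snocinit

lemma V_base (m : ℕ) (b : ℤ) : V m 0 b = if b = 0 then 1 else 0 := by
  by_cases hb : b = 0
  · subst hb
    rw [if_pos rfl, V]
    have : Nonempty {r : Fin 0 → ℤ // pm r ∧ (corr m r ∧ (∑ i, r i) = 0)} :=
      ⟨⟨fun i => i.elim0, fun i => i.elim0, fun j => j.elim0, by simp⟩⟩
    have : Subsingleton {r : Fin 0 → ℤ // pm r ∧ (corr m r ∧ (∑ i, r i) = 0)} := by
      constructor
      rintro ⟨r, _⟩ ⟨s, _⟩
      apply Subtype.ext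
      funext i
      exact i.elim0
    exact Nat.card_unique
  · rw [if_neg hb, V]
    have : IsEmpty {r : Fin 0 → ℤ // pm r ∧ (corr m r ∧ (∑ i, r i) = b)} := by
      constructor
      rintro ⟨r, _, _, hsum⟩
      apply hb
      rw [← hsum]
      simp
    exact Nat.card_of_isEmpty

lemma V_zero_of_gt (m n : ℕ) (b : ℤ) (h : (n:ℤ) < b) : V m n b = 0 := by
  rw [V]
  have : IsEmpty {r : Fin n → ℤ // pm r ∧ (corr m r ∧ (∑ i, r i) = b)} := by
    constructor
    rintro ⟨r, hpm, _, hsum⟩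
    have hle : (∑ i, r i) ≤ ∑ _i : Fin n, (1:ℤ) := by
      apply Finset.sum_le_sum
      intro i _
      rcases hpm i with h1 | h1 <;> omega
    simp only [Finset.sum_const, Finset.card_univ, Fintype.card_fin, smul_eq_mul, nsmul_eq_mul, mul_one] at hle
    omega
  exact Nat.card_of_isEmpty

lemma nat_card_sigma {ι : Type*} [Fintype ι] (f : ι → Type*) [∀ i, Finite (f i)] :
    Nat.card (Σ i, f i) = ∑ i, Nat.card (f i) := by
  have := fun i => Fintype.ofFinite (f i)
  simp only [Nat.card_eq_fintype_card]
  exact Fintype.card_sigma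

lemma corridorCount_eq_sum (m n : ℕ) :
    corridorCount m n 0 = ∑ b ∈ Finset.Icc (-(n:ℤ)) (n:ℤ), V m n b := by
  classical
  -- step 1 : rewrite corridorCount as Nat.card of the pm/corr subtype
  have h1 : corridorCount m n 0 = Nat.card {r : Fin n → ℤ // pm r ∧ corr m r} := by
    rw [corridorCount]
    apply Nat.card_congr
    apply Equiv.subtypeEquivRight
    intro r
    simp [pm, corr]
  rw [h1]
  -- step 2 : the sum map into Icc
  set A := {r : Fin n → ℤ // pm r ∧ corr m r} with hA
  have hbound : ∀ r : A, (∑ i, r.1 i) ∈ Finset.Icc (-(n:ℤ)) (n:ℤ) := by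
    intro r
    have hpm := r.2.1
    rw [Finset.mem_Icc]
    constructor
    · have : ∑ _i : Fin n, (-1:ℤ) ≤ ∑ i, r.1 i := by
        apply Finset.sum_le_sum
        intro i _
        rcases hpm i with h1 | h1 <;> omega
      simp only [Finset.sum_const, Finset.card_univ, Fintype.card_fin, nsmul_eq_mul] at this
      omega
    · have : ∑ i, r.1 i ≤ ∑ _i : Fin n, (1:ℤ) := by
        apply Finset.sum_le_sum
        intro i _
        rcases hpm i with h1 | h1 <;> omega
      simp only [Finset.sum_const, Finset.card_univ, Fintype.card_fin, nsmul_eq_mul, mul_one] at this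
      omega
  set f : A → ↥(Finset.Icc (-(n:ℤ)) (n:ℤ)) := fun r => ⟨∑ i, r.1 i, hbound r⟩ with hf
  have e1 : A ≃ Σ bb : ↥(Finset.Icc (-(n:ℤ)) (n:ℤ)), {a : A // f a = bb} :=
    (Equiv.sigmaFiberEquiv f).symm
  have hfib : ∀ bb : ↥(Finset.Icc (-(n:ℤ)) (n:ℤ)),
      Nat.card {a : A // f a = bb} = V m n bb.1 := by
    intro bb
    rw [V]
    apply Nat.card_congr
    refine
      { toFun := fun a => ⟨a.1.1, a.1.2.1, a.1.2.2, congrArg Subtype.val a.2⟩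
        invFun := fun r => ⟨⟨r.1, r.2.1, r.2.2.1⟩, Subtype.ext r.2.2.2⟩
        left_inv := fun a => by ext; rfl
        right_inv := fun r => by ext; rfl }
  have hfin : ∀ bb : ↥(Finset.Icc (-(n:ℤ)) (n:ℤ)), Finite {a : A // f a = bb} := by
    intro bb
    have : Finite A := finite_aux _
    exact Subtype.finite
  rw [Nat.card_congr e1, nat_card_sigma]
  rw [Finset.sum_congr rfl (fun bb _ => rfl)]
  calc ∑ bb : ↥(Finset.Icc (-(n:ℤ)) (n:ℤ)), Nat.card {a : A // f a = bb}
      = ∑ bb : ↥(Finset.Icc (-(n:ℤ)) (n:ℤ)), V m n bb.1 := by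
        exact Finset.sum_congr rfl (fun bb _ => hfib bb)
    _ = ∑ b ∈ Finset.Icc (-(n:ℤ)) (n:ℤ), V m n b := by
        exact Finset.sum_coe_sort _ _


lemma V_eq_W (m : ℕ) : ∀ (n : ℕ) (b : ℤ), V m n b = W m n b := by
  intro n
  induction n with
  | zero =>
    intro b
    rw [V_base]
    simp [W]
  | succ n ih =>
    intro b
    rw [V_rec]
    show _ = W m (n+1) b
    rw [show W m (n+1) b = if 0 ≤ b ∧ b ≤ (m:ℤ) then W m n (b-1) + W m n (b+1) else 0 from rfl]
    by_cases h : 0 ≤ b ∧ b ≤ (m:ℤ)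
    · rw [if_pos h, if_pos h, ih, ih]
    · rw [if_neg h, if_neg h]

lemma main_lemma (m n : ℕ) :
    (corridorCount m n 0 : ℤ) =
      ((Finset.range (m+2)).sup' (Finset.nonempty_range_iff.mpr (by omega))
          (fun k => circPascal (m+2) 0 n (k : ℤ)) : ℤ) -
      ((Finset.range (m+2)).inf' (Finset.nonempty_range_iff.mpr (by omega))
          (fun k => circPascal (m+2) 0 n (k : ℤ)) : ℤ) := by
  classical
  set q := n / 2 with hq
  set r := n % 2 with hrdef
  have hn : n = 2*q + r := (Nat.div_add_mod n 2).symm ▸ by omega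
  have hr : r < 2 := Nat.mod_lt _ (by omega)
  set Scount : ℕ := if r ≤ m then (m - r)/2 + 1 else 0 with hSdef
  have hS1 : ∀ s : ℕ, s < Scount → (r:ℤ) + 2*s ≤ (m:ℤ) := by
    intro s hs
    by_cases hrm : r ≤ m
    · rw [hSdef, if_pos hrm] at hs
      have : s ≤ (m - r)/2 := by omega
      have : 2*s ≤ m - r := by omega
      push_cast
      omega
    · rw [hSdef, if_neg hrm] at hs; omega
  have hS2 : (m:ℤ) + 2 ≤ (r:ℤ) + 2*(Scount:ℤ) + 1 := by
    by_cases hrm : r ≤ m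
    · rw [hSdef, if_pos hrm]
      push_cast
      omega
    · rw [hSdef, if_neg hrm]
      push_cast
      omega
  set Z : ℤ → ℤ := fun t => (sig (m+2) n t : ℤ) with hZ
  have hcong : ∀ t t' : ℤ, ((m:ℤ)+2) ∣ (t - t') → Z t = Z t' := by
    intro t t' h
    rw [hZ]
    norm_num
    rw [sig_congr (by push_cast; exact_mod_cast h)]
  have hsym : ∀ t : ℤ, Z t = Z ((n:ℤ) - t) := by
    intro t; rw [hZ]; norm_num; rw [← sig_symm]
  -- the per-step value
  have hterm : ∀ s : ℕ, s < Scount →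
      (W m n ((r:ℤ) + 2*s) : ℤ) = Z ((q:ℤ)+(r:ℤ)+(s:ℤ)) - Z ((q:ℤ)+(r:ℤ)+(s:ℤ)+1) := by
    intro s hs
    exact W_closed m n ((q:ℤ)+(r:ℤ)+(s:ℤ)) _ (by push_cast; omega) (by positivity) (hS1 s hs)
  -- Step 1: corridorCount = Z (q+r) - Z (q+r+Scount)
  have step1 : (corridorCount m n 0 : ℤ) = Z ((q:ℤ)+(r:ℤ)) - Z ((q:ℤ)+(r:ℤ)+(Scount:ℤ)) := by
    rw [corridorCount_eq_sum]
    push_cast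
    set T : Finset ℤ := (Finset.range Scount).image (fun s : ℕ => (r:ℤ) + 2*s) with hT
    have hWzero : ∀ b ∈ Finset.Icc (-(n:ℤ)) (n:ℤ), b ∉ T → (V m n b : ℤ) = 0 := by
      intro b hb hbT
      rw [V_eq_W]
      norm_num
      by_cases h1 : 0 ≤ b ∧ b ≤ (m:ℤ)
      · by_cases h2 : (2:ℤ) ∣ ((n:ℤ) + b)
        · exfalso
          apply hbT
          rw [hT, Finset.mem_image]
          have hbr : ∃ s : ℕ, b = (r:ℤ) + 2*s := by
            refine ⟨((b - r)/2).toNat, ?_⟩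
            have h3 : (2:ℤ) ∣ (b - r) := by
              have : (n:ℤ) = 2*(q:ℤ) + (r:ℤ) := by push_cast; omega
              omega
            omega
          obtain ⟨s, hs⟩ := hbr
          refine ⟨s, ?_, hs.symm⟩
          rw [Finset.mem_range]
          by_contra hcon
          push_neg at hcon
          by_cases hrm : r ≤ m
          · rw [hSdef, if_pos hrm] at hcon
            have : (s:ℤ) ≥ (m-r)/2 + 1 := by exact_mod_cast hcon
            have h5 : (m:ℤ) - r < 2*((m - r : ℕ):ℤ)/2 + 2 := by push_cast; omega
            have h6 : ((m - r : ℕ):ℤ) = (m:ℤ) - r := by push_cast; omega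
            have : b > m := by
              rw [hs]
              push_cast at this ⊢
              omega
            omega
          · have : r = 1 ∧ m = 0 := by omega
            obtain ⟨hr1, hm0⟩ := this
            rw [hs, hr1, hm0] at h1
            push_cast at h1
            omega
        · exact W_zero_of_parity m n b h2
      · exact W_zero_of_not_mem m n b h1
    have hWzero2 : ∀ b ∈ T, b ∉ Finset.Icc (-(n:ℤ)) (n:ℤ) → (V m n b : ℤ) = 0 := by
      intro b hb hbI
      rw [hT, Finset.mem_image] at hb
      obtain ⟨s, hsr, hsb⟩ := hb
      rw [Finset.mem_range] at hsr
      rw [Finset.mem_Icc] at hbI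
      push_neg at hbI
      have hb0 : 0 ≤ b := by rw [← hsb]; positivity
      have : (n:ℤ) < b := by
        rcases le_or_gt b (n:ℤ) with h | h
        · exfalso; exact absurd (hbI (by omega)) (by omega)
        · exact h
      rw [V_zero_of_gt m n b this]
      norm_num
    have e1 : ∑ b ∈ Finset.Icc (-(n:ℤ)) (n:ℤ), (V m n b : ℤ)
        = ∑ b ∈ Finset.Icc (-(n:ℤ)) (n:ℤ) ∪ T, (V m n b : ℤ) := by
      apply Finset.sum_subset Finset.subset_union_left
      intro b hb hbI
      rcases Finset.mem_union.mp hb with h | h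
      · exact absurd h hbI
      · exact hWzero2 b h hbI
    have e2 : ∑ b ∈ T, (V m n b : ℤ)
        = ∑ b ∈ Finset.Icc (-(n:ℤ)) (n:ℤ) ∪ T, (V m n b : ℤ) := by
      apply Finset.sum_subset Finset.subset_union_right
      intro b hb hbT
      rcases Finset.mem_union.mp hb with h | h
      · exact hWzero b h hbT
      · exact absurd h hbT
    rw [e1, ← e2]
    have e3 : ∑ b ∈ T, (V m n b : ℤ) = ∑ s ∈ Finset.range Scount, (V m n ((r:ℤ) + 2*s) : ℤ) := by
      rw [hT, Finset.sum_image]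
      intro s _ t _ hst
      have hst' : (r:ℤ) + 2*(s:ℤ) = (r:ℤ) + 2*(t:ℤ) := hst
      omega
    rw [e3]
    have e4 : ∀ s ∈ Finset.range Scount, (V m n ((r:ℤ) + 2*s) : ℤ)
        = (fun s : ℕ => Z ((q:ℤ)+(r:ℤ)+(s:ℤ))) s - (fun s : ℕ => Z ((q:ℤ)+(r:ℤ)+(s:ℤ))) (s+1) := by
      intro s hs
      rw [V_eq_W]
      rw [hterm s (Finset.mem_range.mp hs)]
      push_cast
      ring
    rw [Finset.sum_congr rfl e4, Finset.sum_range_sub']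
    push_cast
    ring
  -- Step 2 : chain monotonicity
  have hstep : ∀ s : ℕ, s < Scount → Z ((q:ℤ)+(r:ℤ)+(s:ℤ)+1) ≤ Z ((q:ℤ)+(r:ℤ)+(s:ℤ)) := by
    intro s hs
    have := hterm s hs
    have hW : (0:ℤ) ≤ (W m n ((r:ℤ) + 2*s) : ℤ) := by positivity
    omega
  have hupper : ∀ s : ℕ, s ≤ Scount → Z ((q:ℤ)+(r:ℤ)+(s:ℤ)) ≤ Z ((q:ℤ)+(r:ℤ)) := by
    intro s
    induction s with
    | zero => intro _; simp
    | succ s ih =>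
      intro hs
      have h1 := hstep s (by omega)
      have h2 := ih (by omega)
      have e : (q:ℤ)+(r:ℤ)+((s:ℤ)+1) = (q:ℤ)+(r:ℤ)+(s:ℤ)+1 := by ring
      push_cast
      rw [e]
      omega
  have hlower : ∀ j s : ℕ, s + j = Scount → Z ((q:ℤ)+(r:ℤ)+(Scount:ℤ)) ≤ Z ((q:ℤ)+(r:ℤ)+(s:ℤ)) := by
    intro j
    induction j with
    | zero => intro s hs; have : s = Scount := by omega
              rw [this]
    | succ j ih =>
      intro s hs
      have h1 := hstep s (by omega)
      have h2 := ih (s+1) (by omega)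
      have e : (q:ℤ)+(r:ℤ)+((s:ℤ)+1) = (q:ℤ)+(r:ℤ)+(s:ℤ)+1 := by ring
      push_cast at h2
      rw [e] at h2
      omega
  have hbo : ∀ x : ℤ, (q:ℤ) - (Scount:ℤ) ≤ x → x ≤ (q:ℤ)+(r:ℤ)+(Scount:ℤ) →
      Z ((q:ℤ)+(r:ℤ)+(Scount:ℤ)) ≤ Z x ∧ Z x ≤ Z ((q:ℤ)+(r:ℤ)) := by
    have key : ∀ x : ℤ, (q:ℤ)+(r:ℤ) ≤ x → x ≤ (q:ℤ)+(r:ℤ)+(Scount:ℤ) →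
        Z ((q:ℤ)+(r:ℤ)+(Scount:ℤ)) ≤ Z x ∧ Z x ≤ Z ((q:ℤ)+(r:ℤ)) := by
      intro x h1 h2
      obtain ⟨s, hs⟩ : ∃ s : ℕ, (s:ℤ) = x - (q:ℤ) - (r:ℤ) := ⟨(x - (q:ℤ) - (r:ℤ)).toNat, by omega⟩
      have hx : x = (q:ℤ)+(r:ℤ)+(s:ℤ) := by omega
      have hsS : s ≤ Scount := by omega
      rw [hx]
      exact ⟨hlower (Scount - s) s (by omega) , hupper s hsS⟩
    intro x h1 h2
    by_cases hx : (q:ℤ)+(r:ℤ) ≤ x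
    · exact key x hx h2
    · have hxq : x ≤ (q:ℤ) := by omega
      have hx' : ((n:ℤ) - x) ≥ (q:ℤ)+(r:ℤ) := by push_cast; omega
      have hx'' : ((n:ℤ) - x) ≤ (q:ℤ)+(r:ℤ)+(Scount:ℤ) := by push_cast; omega
      rw [hsym x]
      exact key _ hx' hx''
  -- Step 3 : identify sup' and inf'
  have hd2 : 1 ≤ m + 2 := by omega
  have hcp : ∀ k : ℕ, circPascal (m+2) 0 n (k:ℤ) = sig (m+2) n (k:ℤ) :=
    fun k => circPascal_eq_sig (m+2) n hd2 (k:ℤ)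
  have hcover : ∀ k : ℕ, k < m + 2 → ∃ x : ℤ,
      ((q:ℤ) - (Scount:ℤ) ≤ x ∧ x ≤ (q:ℤ)+(r:ℤ)+(Scount:ℤ)) ∧ ((m:ℤ)+2) ∣ ((k:ℤ) - x) := by
    intro k hk
    have h1 := Int.emod_nonneg ((k:ℤ) - ((q:ℤ) - (Scount:ℤ))) (by omega : ((m:ℤ)+2) ≠ 0)
    have h2 := Int.emod_lt_of_pos ((k:ℤ) - ((q:ℤ) - (Scount:ℤ))) (by omega : (0:ℤ) < (m:ℤ)+2)
    refine ⟨(q:ℤ) - (Scount:ℤ) + ((k:ℤ) - ((q:ℤ) - (Scount:ℤ))) % ((m:ℤ)+2), ⟨by omega, by omega⟩, ?_⟩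
    have he : (k:ℤ) - ((q:ℤ) - (Scount:ℤ) + ((k:ℤ) - ((q:ℤ) - (Scount:ℤ))) % ((m:ℤ)+2))
        = ((m:ℤ)+2) * (((k:ℤ) - ((q:ℤ) - (Scount:ℤ))) / ((m:ℤ)+2)) := by
      rw [Int.emod_def]
      ring
    rw [he]
    exact Dvd.intro _ rfl
  have hub : ∀ k ∈ Finset.range (m+2), sig (m+2) n (k:ℤ) ≤ sig (m+2) n ((q:ℤ)+(r:ℤ)) := by
    intro k hk
    obtain ⟨x, ⟨hx1, hx2⟩, hdvd⟩ := hcover k (Finset.mem_range.mp hk)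
    have h1 : Z (k:ℤ) = Z x := hcong _ _ hdvd
    have h2 := (hbo x hx1 hx2).2
    rw [← h1] at h2
    simp only [hZ] at h2
    exact_mod_cast h2
  have hlb : ∀ k ∈ Finset.range (m+2), sig (m+2) n ((q:ℤ)+(r:ℤ)+(Scount:ℤ)) ≤ sig (m+2) n (k:ℤ) := by
    intro k hk
    obtain ⟨x, ⟨hx1, hx2⟩, hdvd⟩ := hcover k (Finset.mem_range.mp hk)
    have h1 : Z (k:ℤ) = Z x := hcong _ _ hdvd
    have h2 := (hbo x hx1 hx2).1
    rw [← h1] at h2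
    simp only [hZ] at h2
    exact_mod_cast h2
  have hkM : (q + r) % (m+2) ∈ Finset.range (m+2) := Finset.mem_range.mpr (Nat.mod_lt _ (by omega))
  have hkMval : sig (m+2) n (((q + r) % (m+2) : ℕ) : ℤ) = sig (m+2) n ((q:ℤ)+(r:ℤ)) := by
    apply sig_congr
    push_cast
    have : ((q:ℤ)+(r:ℤ)) % ((m:ℤ)+2) - ((q:ℤ)+(r:ℤ)) = -(((m:ℤ)+2) * (((q:ℤ)+(r:ℤ)) / ((m:ℤ)+2))) := by
      rw [Int.emod_def]; ring
    rw [this]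
    exact Dvd.dvd.neg_right (Dvd.intro _ rfl)
  have hkN : (q + r + Scount) % (m+2) ∈ Finset.range (m+2) := Finset.mem_range.mpr (Nat.mod_lt _ (by omega))
  have hkNval : sig (m+2) n (((q + r + Scount) % (m+2) : ℕ) : ℤ) = sig (m+2) n ((q:ℤ)+(r:ℤ)+(Scount:ℤ)) := by
    apply sig_congr
    push_cast
    have : ((q:ℤ)+(r:ℤ)+(Scount:ℤ)) % ((m:ℤ)+2) - ((q:ℤ)+(r:ℤ)+(Scount:ℤ))
        = -(((m:ℤ)+2) * (((q:ℤ)+(r:ℤ)+(Scount:ℤ)) / ((m:ℤ)+2))) := by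
      rw [Int.emod_def]; ring
    rw [this]
    exact Dvd.dvd.neg_right (Dvd.intro _ rfl)
  have hsup : ∀ hne : (Finset.range (m+2)).Nonempty, (Finset.range (m+2)).sup' hne
      (fun k => ((circPascal (m+2) 0 n (k : ℤ) : ℕ) : ℤ)) = ((sig (m+2) n ((q:ℤ)+(r:ℤ)) : ℕ) : ℤ) := by
    intro hne
    apply le_antisymm
    · apply Finset.sup'_le
      intro k hk
      rw [hcp k]
      exact_mod_cast hub k hk
    · have := Finset.le_sup' (f := fun k : ℕ => ((circPascal (m+2) 0 n (k : ℤ) : ℕ) : ℤ)) hkM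
      rw [hcp, hkMval] at this
      exact this
  have hinf : ∀ hne : (Finset.range (m+2)).Nonempty, (Finset.range (m+2)).inf' hne
      (fun k => ((circPascal (m+2) 0 n (k : ℤ) : ℕ) : ℤ)) = ((sig (m+2) n ((q:ℤ)+(r:ℤ)+(Scount:ℤ)) : ℕ) : ℤ) := by
    intro hne
    apply le_antisymm
    · have := Finset.inf'_le (f := fun k : ℕ => ((circPascal (m+2) 0 n (k : ℤ) : ℕ) : ℤ)) hkN
      rw [hcp, hkNval] at this
      exact this
    · apply Finset.le_inf'
      intro k hk
      rw [hcp k]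
      exact_mod_cast hlb k hk
  rw [hsup _, hinf _, step1]

/-- For `d ≥ 2` and `m = d−2`, the corridor number `c^{(m)}_n` equals the range
(max minus min over `k = 0,…,d−1`) of row `n` of the circular Pascal array of order `d`. -/
theorem corridor_eq_circPascal_range (d : ℕ) (hd : 2 ≤ d) (n : ℕ) :
    (corridorCount (d - 2) n 0 : ℤ) =
      ((Finset.range d).sup' (Finset.nonempty_range_iff.mpr (by omega))
          (fun k => circPascal d 0 n (k : ℤ)) : ℤ) -
      ((Finset.range d).inf' (Finset.nonempty_range_iff.mpr (by omega))
          (fun k => circPascal d 0 n (k : ℤ)) : ℤ) := by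
  obtain ⟨m, rfl⟩ : ∃ m, d = m + 2 := ⟨d - 2, by omega⟩
  have h : m + 2 - 2 = m := by omega
  rw [h]
  exact main_lemma m n
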